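/- arXiv:1004.3794 — 4 statements merged into one kernel-verified Lean document; each statement's English description precedes it below -/
import Mathlib

section
/- Let H_in and H_out be finite-dimensional Hilbert spaces, and let S_in be a set of density matrices on H_in and S_out an abelian set of density matrices on H_out (all pairwise commuting, hence simultaneously diagonal in an orthonormal basis (|i⟩)_{i=1}^d). Suppose L: L(H_in) → L(H_out) is a linear map such that L(S_in) ⊆ S_out and for every POVM (P^i) on H_out the dual images L*(P^i) are statistically equivalent on S_in to some POVM on H_in. Then there exists a completely positive trace-preserving map E: L(H_in) → L(H_out) with E(ρ) = L(ρ) for all ρ ∈ S_in; moreover E can be taken of the form E(ρ) = Σ_i Tr[Π̃^i ρ] |i⟩⟨i| for some POVM (Π̃^i) on H_in. -/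
open scoped BigOperators Matrix Kronecker ComplexOrder
open Matrix

/-- A density matrix: positive semidefinite with unit trace. -/
def IsDensity {n : Type*} [Fintype n] (ρ : Matrix n n ℂ) : Prop :=
  ρ.PosSemidef ∧ ρ.trace = 1

/-- A POVM indexed by a finite decision set. -/
def IsPOVM {n X : Type*} [Fintype n] [DecidableEq n] [Fintype X]
    (P : X → Matrix n n ℂ) : Prop :=
  (∀ i, (P i).PosSemidef) ∧ ∑ i, P i = 1

/-- Partial trace over the first tensor factor. -/
noncomputable def ptrA {a b : Type*} [Fintype a] (M : Matrix (a × b) (a × b) ℂ) : Matrix b b ℂ :=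
  Matrix.of fun y y' => ∑ x, M (x, y) (x, y')

/-- Partial trace over the second tensor factor. -/
noncomputable def ptrB {a b : Type*} [Fintype b] (M : Matrix (a × b) (a × b) ℂ) : Matrix a a ℂ :=
  Matrix.of fun x x' => ∑ y, M (x, y) (x', y)

/-- The local state space of subsystem B induced by a bipartite state. -/
def SB {a b : Type*} [Fintype a] [DecidableEq a] [Fintype b] [DecidableEq b]
    (ρ : Matrix (a × b) (a × b) ℂ) : Set (Matrix b b ℂ) :=
  {σ | ∃ (P : Matrix a a ℂ) (r : ℝ), P.PosSemidef ∧ ((1 : Matrix a a ℂ) - P).PosSemidef ∧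
    0 < r ∧ ((P ⊗ₖ (1 : Matrix b b ℂ)) * ρ).trace = (r : ℂ) ∧
    σ = (r : ℂ)⁻¹ • ptrA ((P ⊗ₖ (1 : Matrix b b ℂ)) * ρ)}

/-- The map `id_A ⊗ L` acting on bipartite matrices. -/
def idTensor {a b b' : Type*} (L : Matrix b b ℂ →ₗ[ℂ] Matrix b' b' ℂ)
    (ρ : Matrix (a × b) (a × b) ℂ) : Matrix (a × b') (a × b') ℂ :=
  Matrix.of fun x y => L (Matrix.of fun u v => ρ (x.1, u) (y.1, v)) x.2 y.2

/-- Completely positive trace-preserving map, via a Kraus representation. -/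
def IsCPTP {n m : Type*} [Fintype n] [DecidableEq n] [Fintype m] [DecidableEq m]
    (E : Matrix n n ℂ →ₗ[ℂ] Matrix m m ℂ) : Prop :=
  ∃ (k : ℕ) (K : Fin k → Matrix m n ℂ),
    (∑ j, (K j)ᴴ * K j = 1) ∧ ∀ X, E X = ∑ j, K j * X * (K j)ᴴ

/-- Optimal averaged payoff of a quantum statistical model in a decision problem. -/
noncomputable def qBayesSup {Θ n X : Type*} [Fintype Θ] [Fintype n] [DecidableEq n] [Fintype X]
    (ρ : Θ → Matrix n n ℂ) (ℓ : Θ → X → ℝ) : ℝ :=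
  sSup {s | ∃ P : X → Matrix n n ℂ, IsPOVM P ∧
    s = (Fintype.card Θ : ℝ)⁻¹ * ∑ θ, ∑ i, ℓ θ i * ((ρ θ * P i).trace).re}

/-- Optimal payoff of player B in a quantum statistical decision game. -/
noncomputable def gameSup {a b X : Type*} [Fintype a] [Fintype b] [DecidableEq b] [Fintype X]
    (ρ : Matrix (a × b) (a × b) ℂ) (O : X → Matrix a a ℂ) : ℝ :=
  sSup {s | ∃ P : X → Matrix b b ℂ, IsPOVM P ∧
    s = (∑ i, (((O i) ⊗ₖ (P i)) * ρ).trace).re}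

lemma aux_std_mul_mul {n m : Type*} [Fintype n] [DecidableEq n] [Fintype m] [DecidableEq m]
    (i j : m) (k l : n) (M : Matrix n n ℂ) :
    single i k (1:ℂ) * M * single l j (1:ℂ) = (M k l) • single i j 1 := by
  ext a b
  simp [mul_apply, single, ite_and, Finset.sum_ite_eq, Finset.sum_ite_eq']
  by_cases h1 : i = a <;> by_cases h2 : j = b <;> simp [h1, h2]

lemma aux_sum_std {m : Type*} [Fintype m] [DecidableEq m] :
    ∑ i : m, single i i (1:ℂ) = 1 := by
  ext a b
  simp [Matrix.sum_apply, single, one_apply, ite_and, Finset.sum_ite_eq]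

lemma aux_trace_std_mul {m : Type*} [Fintype m] [DecidableEq m] (i : m) (M : Matrix m m ℂ) :
    (single i i (1:ℂ) * M).trace = M i i := by
  simp [Matrix.trace, Matrix.diag, mul_apply, single, ite_and, Finset.sum_ite_eq]

lemma aux_diag_eq {m : Type*} [Fintype m] [DecidableEq m] {M : Matrix m m ℂ} (h : M.IsDiag) :
    M = ∑ i, (M i i) • single i i (1:ℂ) := by
  ext a b
  simp [Matrix.sum_apply, single, ite_and, Finset.sum_ite_eq]
  by_cases hab : a = b
  · subst hab; simp
  · simp [hab, h hab]

lemma aux_std_conjT {n m : Type*} [DecidableEq n] [DecidableEq m] (i : m) (k : n) :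
    (single i k (1:ℂ))ᴴ = single k i (1:ℂ) := by
  ext a b
  simp [conjTranspose_apply, single, and_comm]

lemma aux_std_posSemidef {m : Type*} [Fintype m] [DecidableEq m] (i : m) :
    (single i i (1:ℂ)).PosSemidef := by
  have := Matrix.posSemidef_conjTranspose_mul_self (single i i (1:ℂ))
  rwa [aux_std_conjT, single_mul_single_same, one_mul] at this

/-- Classical-output extension theorem for statistical morphisms (Proposition 2). -/
theorem stmt7 {n m : Type*} [Fintype n] [DecidableEq n] [Fintype m] [DecidableEq m]
    (Sin : Set (Matrix n n ℂ)) (hSin : ∀ ρ ∈ Sin, IsDensity ρ)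
    (Sout : Set (Matrix m m ℂ)) (hSout : ∀ σ ∈ Sout, IsDensity σ ∧ σ.IsDiag)
    (L : Matrix n n ℂ →ₗ[ℂ] Matrix m m ℂ)
    (hmap : ∀ ρ ∈ Sin, L ρ ∈ Sout)
    (hdual : ∀ (X : Type) [Fintype X] (P : X → Matrix m m ℂ), IsPOVM P →
      ∃ Q : X → Matrix n n ℂ, IsPOVM Q ∧
        ∀ i, ∀ ρ ∈ Sin, ((P i) * L ρ).trace = ((Q i) * ρ).trace) :
    ∃ E : Matrix n n ℂ →ₗ[ℂ] Matrix m m ℂ, IsCPTP E ∧ (∀ ρ ∈ Sin, E ρ = L ρ) ∧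
      ∃ Pit : m → Matrix n n ℂ, IsPOVM Pit ∧
        ∀ ρ : Matrix n n ℂ, E ρ = ∑ i, ((Pit i * ρ).trace) • Matrix.single i i 1 := by
  classical
  obtain ⟨e⟩ : Nonempty (m ≃ Fin (Fintype.card m)) := ⟨Fintype.equivFin m⟩
  set P0 : Fin (Fintype.card m) → Matrix m m ℂ :=
    fun j => single (e.symm j) (e.symm j) 1 with hP0def
  have hP0 : IsPOVM P0 := by
    refine ⟨fun j => aux_std_posSemidef _, ?_⟩
    rw [← aux_sum_std (m := m)]
    exact Fintype.sum_equiv e.symm _ _ (fun j => rfl)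
  obtain ⟨Q0, hQ0, hQeq⟩ := hdual (Fin (Fintype.card m)) P0 hP0
  set Pit : m → Matrix n n ℂ := fun i => Q0 (e i) with hPitdef
  have hPit : IsPOVM Pit := by
    refine ⟨fun i => hQ0.1 _, ?_⟩
    rw [← hQ0.2]
    exact Fintype.sum_equiv e _ _ (fun i => rfl)
  open MatrixOrder in
  set A : m → Matrix n n ℂ := fun i => CFC.sqrt (Pit i) with hAdef
  have hAherm : ∀ i, (A i)ᴴ = A i := by
    open MatrixOrder in exact fun i => (CFC.sqrt_nonneg (Pit i)).posSemidef.1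
  have hAsq : ∀ i, A i * A i = Pit i := by
    open MatrixOrder in exact fun i => CFC.sqrt_mul_sqrt_self (Pit i) (hPit.1 i).nonneg
  set E : Matrix n n ℂ →ₗ[ℂ] Matrix m m ℂ :=
    { toFun := fun ρ => ∑ i, ((Pit i * ρ).trace) • single i i 1
      map_add' := by
        intro x y
        simp [mul_add, trace_add, add_smul, Finset.sum_add_distrib]
      map_smul' := by
        intro c x
        simp [Matrix.mul_smul, trace_smul, smul_smul, Finset.smul_sum] } with hEdef
  refine ⟨E, ?_, ?_, Pit, hPit, fun ρ => rfl⟩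
  · -- CPTP
    obtain ⟨f⟩ : Nonempty (Fin (Fintype.card (m × n)) ≃ m × n) := ⟨(Fintype.equivFin _).symm⟩
    refine ⟨Fintype.card (m × n),
      fun j => single (f j).1 (f j).2 (1:ℂ) * A (f j).1, ?_, ?_⟩
    · have key : ∀ p : m × n,
          (single p.1 p.2 (1:ℂ) * A p.1)ᴴ * (single p.1 p.2 (1:ℂ) * A p.1)
            = A p.1 * single p.2 p.2 (1:ℂ) * A p.1 := by
        intro p
        rw [conjTranspose_mul, aux_std_conjT, hAherm]
        have : single p.2 p.1 (1:ℂ) * single p.1 p.2 (1:ℂ)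
            = single p.2 p.2 (1:ℂ) := by
          ext a b
          simp [mul_apply, single, ite_and, Finset.sum_ite_eq]
          by_cases h1 : p.2 = a <;> by_cases h2 : p.2 = b <;> simp [h1, h2]
        calc A p.1 * single p.2 p.1 (1:ℂ) * (single p.1 p.2 (1:ℂ) * A p.1)
            = A p.1 * (single p.2 p.1 (1:ℂ) * single p.1 p.2 (1:ℂ)) * A p.1 := by
              simp only [Matrix.mul_assoc]
          _ = A p.1 * single p.2 p.2 (1:ℂ) * A p.1 := by rw [this]
      have step1 : ∑ j, (single (f j).1 (f j).2 (1:ℂ) * A (f j).1)ᴴ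
            * (single (f j).1 (f j).2 (1:ℂ) * A (f j).1)
          = ∑ p : m × n, (single p.1 p.2 (1:ℂ) * A p.1)ᴴ
            * (single p.1 p.2 (1:ℂ) * A p.1) :=
        Fintype.sum_equiv f _ _ (fun j => rfl)
      show ∑ j, (single (f j).1 (f j).2 (1:ℂ) * A (f j).1)ᴴ
            * (single (f j).1 (f j).2 (1:ℂ) * A (f j).1) = 1
      rw [step1]
      calc ∑ p : m × n, (single p.1 p.2 (1:ℂ) * A p.1)ᴴ
            * (single p.1 p.2 (1:ℂ) * A p.1)
          = ∑ p : m × n, A p.1 * single p.2 p.2 (1:ℂ) * A p.1 :=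
            Finset.sum_congr rfl (fun p _ => key p)
        _ = ∑ i : m, A i * (∑ k : n, single k k (1:ℂ)) * A i := by
            rw [Fintype.sum_prod_type]
            refine Finset.sum_congr rfl (fun i _ => ?_)
            simp [Finset.sum_mul, Finset.mul_sum]
        _ = 1 := by
            simp only [aux_sum_std, mul_one, hAsq]
            exact hPit.2
    · intro X
      have key : ∀ p : m × n,
          (single p.1 p.2 (1:ℂ) * A p.1) * X
              * (single p.1 p.2 (1:ℂ) * A p.1)ᴴ
            = ((A p.1 * X * A p.1) p.2 p.2) • single p.1 p.1 (1:ℂ) := by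
        intro p
        rw [conjTranspose_mul, aux_std_conjT, hAherm]
        calc single p.1 p.2 (1:ℂ) * A p.1 * X * (A p.1 * single p.2 p.1 (1:ℂ))
            = single p.1 p.2 (1:ℂ) * (A p.1 * X * A p.1)
                * single p.2 p.1 (1:ℂ) := by
              simp only [Matrix.mul_assoc]
          _ = ((A p.1 * X * A p.1) p.2 p.2) • single p.1 p.1 (1:ℂ) :=
              aux_std_mul_mul _ _ _ _ _
      show E X = ∑ j, (single (f j).1 (f j).2 (1:ℂ) * A (f j).1) * X
          * (single (f j).1 (f j).2 (1:ℂ) * A (f j).1)ᴴ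
      have step1 : ∑ j, (single (f j).1 (f j).2 (1:ℂ) * A (f j).1) * X
            * (single (f j).1 (f j).2 (1:ℂ) * A (f j).1)ᴴ
          = ∑ p : m × n, ((A p.1 * X * A p.1) p.2 p.2) • single p.1 p.1 (1:ℂ) := by
        rw [Fintype.sum_equiv f _
          (fun p => (single p.1 p.2 (1:ℂ) * A p.1) * X
            * (single p.1 p.2 (1:ℂ) * A p.1)ᴴ) (fun j => rfl)]
        exact Finset.sum_congr rfl (fun p _ => key p)
      rw [step1]
      calc E X = ∑ i, ((Pit i * X).trace) • single i i (1:ℂ) := rfl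
        _ = ∑ p : m × n, ((A p.1 * X * A p.1) p.2 p.2) • single p.1 p.1 (1:ℂ) := by
            rw [Fintype.sum_prod_type]
            refine Finset.sum_congr rfl (fun i _ => ?_)
            dsimp only
            rw [← Finset.sum_smul]
            congr 1
            have h3 : (Pit i * X).trace = (A i * X * A i).trace := by
              rw [← hAsq i, Matrix.mul_assoc, trace_mul_comm]
            rw [h3]
            simp [Matrix.trace, Matrix.diag]
  · -- agrees with L on Sin
    intro ρ hρ
    have hdiag : (L ρ).IsDiag := (hSout _ (hmap ρ hρ)).2
    have : E ρ = ∑ i, ((L ρ) i i) • single i i 1 := by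
      refine Finset.sum_congr rfl (fun i _ => ?_)
      congr 1
      have h1 := hQeq (e i) ρ hρ
      have h2 : (P0 (e i) * L ρ).trace = (L ρ) i i := by
        rw [hP0def]
        simp only [Equiv.symm_apply_apply]
        exact aux_trace_std_mul i (L ρ)
      rw [show (Pit i * ρ).trace = (Q0 (e i) * ρ).trace from rfl, ← h1, h2]
    rw [this, ← aux_diag_eq hdiag]
end

section
/- Let S_in be a set of density matrices on H_in, let H₀ ≅ H_out (dimension d), and let S₀ be a complete state space on H₀ (containing d² linearly independent density matrices). Suppose L: L(H_in) → L(H_out) is linear, such that id ⊗ L maps S₀ × S_in into S₀ × S_out where S_out is a set of density matrices, and such that for the Bell POVM (B^i) on H₀ ⊗ H_out there exists a POVM (B̃^i) on H₀ ⊗ H_in with Tr[(id ⊗ L*)(B^i)(ω ⊗ σ)] = Tr[B̃^i (ω ⊗ σ)] for all ω ∈ S₀, σ ∈ S_in, and all i. Then there exists a completely positive trace-preserving map E: L(H_in) → L(H_out) with E(σ) = L(σ) for all σ ∈ S_in. -/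
open scoped BigOperators Matrix Kronecker ComplexOrder
open Matrix

/-- The Weyl (shift-and-multiply) unitaries on `ℂ^d`. -/
noncomputable def weyl (d : ℕ) [NeZero d] (ab : ZMod d × ZMod d) :
    Matrix (ZMod d) (ZMod d) ℂ :=
  Matrix.of fun k l =>
    if k = l + ab.1 then Complex.exp (2 * Real.pi * Complex.I * (ab.2.val * l.val) / d) else 0

/-- The maximally entangled state `Ψ⁺ = d⁻¹ Σ_{i,j} |i⟩⟨j| ⊗ |i⟩⟨j|`. -/
noncomputable def maxEnt (d : ℕ) [NeZero d] :
    Matrix (ZMod d × ZMod d) (ZMod d × ZMod d) ℂ :=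
  Matrix.of fun r c => if r.1 = r.2 ∧ c.1 = c.2 then (d : ℂ)⁻¹ else 0

/-- The generalized Bell projectors. -/
noncomputable def bell (d : ℕ) [NeZero d] (ab : ZMod d × ZMod d) :
    Matrix (ZMod d × ZMod d) (ZMod d × ZMod d) ℂ :=
  (weyl d ab ⊗ₖ (1 : Matrix (ZMod d) (ZMod d) ℂ)) * maxEnt d *
    (weyl d ab ⊗ₖ (1 : Matrix (ZMod d) (ZMod d) ℂ))ᴴ

section Stmt10Aux

/-- Reduction of a bipartite operator against a second-factor matrix. -/
noncomputable def red {a b : Type*} [Fintype a] [Fintype b]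
    (M : Matrix (a × b) (a × b) ℂ) (σ : Matrix b b ℂ) : Matrix a a ℂ :=
  Matrix.of fun x x' => ∑ u, ∑ v, M (x, u) (x', v) * σ v u

lemma trace_mul_kron' {a b : Type*} [Fintype a] [Fintype b]
    (M : Matrix (a × b) (a × b) ℂ) (ω : Matrix a a ℂ) (σ : Matrix b b ℂ) :
    (M * (ω ⊗ₖ σ)).trace = (red M σ * ω).trace := by
  simp only [Matrix.trace, Matrix.diag, Matrix.mul_apply, red, Matrix.of_apply,
    Matrix.kroneckerMap_apply, Fintype.sum_prod_type, Finset.sum_mul, Finset.mul_sum]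
  apply Finset.sum_congr rfl; intro x _
  rw [Finset.sum_comm]
  apply Finset.sum_congr rfl; intro x' _
  apply Finset.sum_congr rfl; intro u _
  apply Finset.sum_congr rfl; intro v _
  ring

lemma trace_mul_stdBasisMatrix' {m : Type*} [Fintype m] [DecidableEq m]
    (A : Matrix m m ℂ) (i j : m) :
    (A * Matrix.single j i 1).trace = A i j := by
  simp only [Matrix.trace, Matrix.diag, Matrix.mul_apply, Matrix.single,
    Matrix.of_apply, mul_ite, mul_one, mul_zero, ite_and]
  rw [Finset.sum_comm]
  simp [Finset.sum_ite_eq, Finset.sum_ite_eq']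

lemma conj_exp_phase (z : ℂ) (hz : star z = -z) :
    Complex.exp z * star (Complex.exp z) = 1 := by
  have : star (Complex.exp z) = Complex.exp (star z) := by
    exact (Complex.exp_conj z).symm
  rw [this, hz, ← Complex.exp_add, add_neg_cancel, Complex.exp_zero]

lemma weyl_phase_conj (d : ℕ) [NeZero d] (b l : ZMod d) :
    star (2 * Real.pi * Complex.I * ((b.val : ℂ) * (l.val : ℂ)) / d)
      = -(2 * Real.pi * Complex.I * ((b.val : ℂ) * (l.val : ℂ)) / d) := by
  have : (starRingEnd ℂ) (2 * Real.pi * Complex.I * ((b.val : ℂ) * (l.val : ℂ)) / d)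
      = -(2 * Real.pi * Complex.I * ((b.val : ℂ) * (l.val : ℂ)) / d) := by
    rw [map_div₀]
    simp only [_root_.map_mul, Complex.conj_I, Complex.conj_ofReal, map_ofNat, map_natCast]
    ring
  exact this

lemma weyl_mul_conjTranspose (d : ℕ) [NeZero d] (ab : ZMod d × ZMod d) :
    weyl d ab * (weyl d ab)ᴴ = 1 := by
  ext k k'
  simp only [Matrix.mul_apply, Matrix.conjTranspose_apply, weyl, Matrix.of_apply]
  have hterm : ∀ l : ZMod d,
      (if k = l + ab.1 then Complex.exp (2 * Real.pi * Complex.I * (ab.2.val * l.val) / d) else 0) *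
        star
          (if k' = l + ab.1 then Complex.exp (2 * Real.pi * Complex.I * (ab.2.val * l.val) / d) else 0)
      = if l = k - ab.1 then (if k' = k then 1 else 0) else 0 := by
    intro l
    by_cases h1 : k = l + ab.1
    · by_cases h2 : k' = l + ab.1
      · have hk : k' = k := h2.trans h1.symm
        have hl : l = k - ab.1 := by rw [h1]; ring
        rw [if_pos h1, if_pos h2, if_pos hl, if_pos hk]
        exact conj_exp_phase _ (weyl_phase_conj d ab.2 l)
      · have hk : ¬ (k' = k) := fun hh => h2 (hh.trans h1)
        have hl : l = k - ab.1 := by rw [h1]; ring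
        rw [if_pos h1, if_neg h2, star_zero, mul_zero, if_pos hl, if_neg hk]
    · have hl : ¬ (l = k - ab.1) := fun hl => h1 (by rw [hl]; ring)
      rw [if_neg h1, zero_mul, if_neg hl]
  rw [Finset.sum_congr rfl fun l _ => hterm l, Finset.sum_ite_eq' Finset.univ (k - ab.1)]
  simp [Matrix.one_apply, eq_comm]

lemma conjTranspose_mul_weyl (d : ℕ) [NeZero d] (ab : ZMod d × ZMod d) :
    (weyl d ab)ᴴ * weyl d ab = 1 := by
  ext l l'
  simp only [Matrix.mul_apply, Matrix.conjTranspose_apply, weyl, Matrix.of_apply]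
  have hterm : ∀ k : ZMod d,
      star
          (if k = l + ab.1 then Complex.exp (2 * Real.pi * Complex.I * (ab.2.val * l.val) / d) else 0) *
        (if k = l' + ab.1 then Complex.exp (2 * Real.pi * Complex.I * (ab.2.val * l'.val) / d) else 0)
      = if k = l + ab.1 then (if l' = l then 1 else 0) else 0 := by
    intro k
    by_cases h1 : k = l + ab.1
    · by_cases h2 : k = l' + ab.1
      · have hl : l' = l := by
          have := h1.symm.trans h2
          exact (add_right_cancel this).symm
        rw [if_pos h1, if_pos h2, if_pos h1, if_pos hl, hl, mul_comm]
        exact conj_exp_phase _ (weyl_phase_conj d ab.2 l)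
      · have hl : ¬ (l' = l) := fun hh => h2 (by rw [hh]; exact h1)
        rw [if_pos h1, if_neg h2, mul_zero, if_pos h1, if_neg hl]
    · rw [if_neg h1, star_zero, zero_mul, if_neg h1]
  rw [Finset.sum_congr rfl fun k _ => hterm k, Finset.sum_ite_eq' Finset.univ (l + ab.1)]
  simp [Matrix.one_apply, eq_comm]

lemma bell_apply' (d : ℕ) [NeZero d] (ab : ZMod d × ZMod d) (x u x' v : ZMod d) :
    bell d ab (x, u) (x', v)
      = (d : ℂ)⁻¹ * (weyl d ab x u * star (weyl d ab x' v)) := by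
  simp only [bell, Matrix.mul_apply, Matrix.conjTranspose_apply, Matrix.kroneckerMap_apply,
    maxEnt, Matrix.of_apply, Matrix.one_apply, Fintype.sum_prod_type]
  simp [mul_ite, ite_mul, mul_zero, zero_mul, ite_and, apply_ite (star : ℂ → ℂ), star_zero,
    Finset.sum_ite_eq, Finset.sum_ite_eq', mul_comm, mul_assoc, mul_left_comm]

lemma red_bell (d : ℕ) [NeZero d] (ab : ZMod d × ZMod d)
    (τ : Matrix (ZMod d) (ZMod d) ℂ) :
    red (bell d ab) τ = (d : ℂ)⁻¹ • (weyl d ab * τᵀ * (weyl d ab)ᴴ) := by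
  ext x x'
  simp only [red, Matrix.of_apply, bell_apply', Matrix.smul_apply, Matrix.mul_apply,
    Matrix.conjTranspose_apply, Matrix.transpose_apply, smul_eq_mul, Finset.mul_sum,
    Finset.sum_mul]
  rw [Finset.sum_comm]
  apply Finset.sum_congr rfl; intro u _
  apply Finset.sum_congr rfl; intro v _
  ring

open scoped MatrixOrder

/-- Square root of a positive semidefinite matrix. -/
noncomputable def Matrix.PosSemidef.sqrt {m : Type*} [Fintype m] [DecidableEq m]
    {B : Matrix m m ℂ} (_hB : B.PosSemidef) : Matrix m m ℂ :=
  CFC.sqrt B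

lemma Matrix.PosSemidef.sqrt_mul_self {m : Type*} [Fintype m] [DecidableEq m]
    {B : Matrix m m ℂ} (hB : B.PosSemidef) : hB.sqrt * hB.sqrt = B :=
  CFC.sqrt_mul_sqrt_self B hB.nonneg

lemma Matrix.PosSemidef.posSemidef_sqrt {m : Type*} [Fintype m] [DecidableEq m]
    {B : Matrix m m ℂ} (hB : B.PosSemidef) : hB.sqrt.PosSemidef :=
  Matrix.nonneg_iff_posSemidef.mp (CFC.sqrt_nonneg B)

lemma sqrt_entry_sum {m : Type*} [Fintype m] [DecidableEq m] {B : Matrix m m ℂ}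
    (hB : B.PosSemidef) (x y : m) :
    ∑ p, star (hB.sqrt p x) * hB.sqrt p y = B x y := by
  conv_rhs => rw [← hB.sqrt_mul_self, Matrix.mul_apply]
  apply Finset.sum_congr rfl; intro p _
  rw [hB.posSemidef_sqrt.isHermitian.apply x p]

/-- Kraus building blocks from a bipartite matrix. -/
noncomputable def krausC {a b : Type*} (S : Matrix (a × b) (a × b) ℂ) (p : a × b) :
    Matrix a b ℂ :=
  Matrix.of fun x v => S p (x, v)

lemma krausC_mul {a b : Type*} [Fintype a] [Fintype b] [DecidableEq a] [DecidableEq b]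
    {B : Matrix (a × b) (a × b) ℂ} (hB : B.PosSemidef) (X : Matrix b b ℂ) :
    ∑ p : a × b, krausC hB.sqrt p * X * (krausC hB.sqrt p)ᴴ = (red B X)ᵀ := by
  ext x x'
  simp only [Matrix.sum_apply, Matrix.mul_apply, Matrix.conjTranspose_apply, krausC,
    Matrix.of_apply, Matrix.transpose_apply, red, Finset.sum_mul, Finset.mul_sum]
  rw [Finset.sum_comm]
  apply Finset.sum_congr rfl; intro u _
  rw [Finset.sum_comm]
  apply Finset.sum_congr rfl; intro v _
  rw [← sqrt_entry_sum hB (x', u) (x, v), Finset.sum_mul]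
  apply Finset.sum_congr rfl; intro p _
  ring

lemma krausC_sq {a b : Type*} [Fintype a] [Fintype b] [DecidableEq a] [DecidableEq b]
    {B : Matrix (a × b) (a × b) ℂ} (hB : B.PosSemidef) :
    ∑ p : a × b, (krausC hB.sqrt p)ᴴ * krausC hB.sqrt p
      = Matrix.of (fun v u => ∑ x : a, B (x, v) (x, u)) := by
  ext v u
  simp only [Matrix.sum_apply, Matrix.mul_apply, Matrix.conjTranspose_apply, krausC,
    Matrix.of_apply]
  rw [Finset.sum_comm]
  apply Finset.sum_congr rfl; intro x _
  exact sqrt_entry_sum hB (x, v) (x, u)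

end Stmt10Aux

/-- Entanglement-assisted extension theorem for statistical morphisms (Proposition 1). -/
theorem stmt10 {n : Type*} [Fintype n] [DecidableEq n] (d : ℕ) [NeZero d]
    (S0 : Set (Matrix (ZMod d) (ZMod d) ℂ)) (hS0 : ∀ ω ∈ S0, IsDensity ω)
    (hS0complete : ∃ f : Fin (d ^ 2) → Matrix (ZMod d) (ZMod d) ℂ,
      (∀ k, f k ∈ S0) ∧ LinearIndependent ℂ f)
    (Sin : Set (Matrix n n ℂ)) (hSin : ∀ ρ ∈ Sin, IsDensity ρ)
    (Sout : Set (Matrix (ZMod d) (ZMod d) ℂ)) (hSout : ∀ τ ∈ Sout, IsDensity τ)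
    (L : Matrix n n ℂ →ₗ[ℂ] Matrix (ZMod d) (ZMod d) ℂ)
    (hmap : ∀ ω ∈ S0, ∀ σ ∈ Sin, ∃ ω' ∈ S0, ∃ τ ∈ Sout,
      idTensor L (ω ⊗ₖ σ) = ω' ⊗ₖ τ)
    (hBell : ∃ Bt : (ZMod d × ZMod d) → Matrix (ZMod d × n) (ZMod d × n) ℂ,
      IsPOVM Bt ∧ ∀ ab : ZMod d × ZMod d, ∀ ω ∈ S0, ∀ σ ∈ Sin,
        (bell d ab * idTensor L (ω ⊗ₖ σ)).trace = (Bt ab * (ω ⊗ₖ σ)).trace) :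
    ∃ E : Matrix n n ℂ →ₗ[ℂ] Matrix (ZMod d) (ZMod d) ℂ,
      IsCPTP E ∧ ∀ σ ∈ Sin, E σ = L σ := by
  classical
  obtain ⟨f, hfmem, hfli⟩ := hS0complete
  obtain ⟨Bt, ⟨hBtpos, hBtsum⟩, hBtstat⟩ := hBell
  have hd0 : (d : ℂ) ≠ 0 := Nat.cast_ne_zero.mpr (NeZero.ne d)
  -- `idTensor L` acts on Kronecker products as `id ⊗ L`
  have hidT : ∀ (ω : Matrix (ZMod d) (ZMod d) ℂ) (σ : Matrix n n ℂ),
      idTensor L (ω ⊗ₖ σ) = ω ⊗ₖ L σ := by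
    intro ω σ
    ext x y
    show L (Matrix.of fun u v => (ω ⊗ₖ σ) (x.1, u) (y.1, v)) x.2 y.2 = _
    have h1 : (Matrix.of fun u v => (ω ⊗ₖ σ) (x.1, u) (y.1, v)) = ω x.1 y.1 • σ := by
      ext u v
      simp [Matrix.kroneckerMap_apply, smul_eq_mul]
    rw [h1, L.map_smul]
    simp [Matrix.kroneckerMap_apply, smul_eq_mul]
  haveI : Nonempty (Fin (d ^ 2)) :=
    ⟨⟨0, by have := Nat.pos_of_ne_zero (NeZero.ne d); positivity⟩⟩
  have hspan : Submodule.span ℂ (Set.range f) = ⊤ := by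
    apply hfli.span_eq_top_of_card_eq_finrank
    simp [Module.finrank_matrix, ZMod.card, sq]
  -- key identity for the reduced operators
  have hred : ∀ σ ∈ Sin, ∀ ab : ZMod d × ZMod d,
      red (Bt ab) σ = (d : ℂ)⁻¹ • (weyl d ab * (L σ)ᵀ * (weyl d ab)ᴴ) := by
    intro σ hσ ab
    rw [← red_bell]
    have hφ0 : ∀ ω ∈ S0, ((red (Bt ab) σ - red (bell d ab) (L σ)) * ω).trace = 0 := by
      intro ω hω
      have h1 := (hBtstat ab ω hω σ hσ).symm
      rw [hidT ω σ, trace_mul_kron', trace_mul_kron'] at h1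
      rw [Matrix.sub_mul, Matrix.trace_sub, h1, sub_self]
    set A := red (Bt ab) σ - red (bell d ab) (L σ) with hAdef
    let φ : Matrix (ZMod d) (ZMod d) ℂ →ₗ[ℂ] ℂ :=
      (Matrix.traceLinearMap (ZMod d) ℂ ℂ).comp (LinearMap.mulLeft ℂ A)
    have hker : ∀ ω, φ ω = 0 := by
      intro ω
      have hsub : Submodule.span ℂ (Set.range f) ≤ LinearMap.ker φ :=
        Submodule.span_le.2 (by
          rintro _ ⟨k, rfl⟩
          simpa [φ, LinearMap.mem_ker] using hφ0 _ (hfmem k))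
      exact hsub (by rw [hspan]; trivial)
    have hA0 : A = 0 := by
      ext i j
      have h2 := hker (Matrix.single j i 1)
      simpa [φ, trace_mul_stdBasisMatrix'] using h2
    exact sub_eq_zero.mp hA0
  -- Weyl unitarity in transposed form
  have hWa : ∀ ab : ZMod d × ZMod d, ((weyl d ab)ᴴ)ᵀ * (weyl d ab)ᵀ = 1 := by
    intro ab; rw [← Matrix.transpose_mul, weyl_mul_conjTranspose, Matrix.transpose_one]
  have hWb : ∀ ab : ZMod d × ZMod d, (weyl d ab)ᵀ * ((weyl d ab)ᴴ)ᵀ = 1 := by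
    intro ab; rw [← Matrix.transpose_mul, conjTranspose_mul_weyl, Matrix.transpose_one]
  -- the scalar
  set c : ℂ := ((Real.sqrt d : ℝ) : ℂ)⁻¹ with hc
  have hccstar : star c = c := by
    rw [hc, star_inv₀, Complex.star_def, Complex.conj_ofReal]
  have hcc : c * c = (d : ℂ)⁻¹ := by
    rw [hc, ← mul_inv]
    congr 1
    rw [← Complex.ofReal_mul, Real.mul_self_sqrt (Nat.cast_nonneg d)]
    simp
  -- the Kraus operators
  set K0 : ((ZMod d × ZMod d) × (ZMod d × n)) → Matrix (ZMod d) n ℂ :=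
    fun j => c • ((weyl d j.1)ᵀ * krausC (hBtpos j.1).sqrt j.2) with hK0
  -- trace preservation
  have hTP : ∑ j : (ZMod d × ZMod d) × (ZMod d × n), (K0 j)ᴴ * K0 j = 1 := by
    have hterm : ∀ ab : ZMod d × ZMod d,
        ∑ p : ZMod d × n, (K0 (ab, p))ᴴ * K0 (ab, p)
        = (d : ℂ)⁻¹ • Matrix.of (fun v u => ∑ a2 : ZMod d, Bt ab (a2, v) (a2, u)) := by
      intro ab
      have h3 : ∀ p : ZMod d × n, (K0 (ab, p))ᴴ * K0 (ab, p)
          = (d : ℂ)⁻¹ • ((krausC (hBtpos ab).sqrt p)ᴴ * krausC (hBtpos ab).sqrt p) := by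
        intro p
        simp only [hK0, Matrix.conjTranspose_smul, Matrix.conjTranspose_mul]
        rw [Matrix.smul_mul, Matrix.mul_smul, smul_smul, hccstar, hcc]
        congr 1
        rw [Matrix.mul_assoc, ← Matrix.mul_assoc (((weyl d ab)ᵀ)ᴴ)]
        show (krausC (hBtpos ab).sqrt p)ᴴ *
          (((weyl d ab)ᴴ)ᵀ * (weyl d ab)ᵀ * krausC (hBtpos ab).sqrt p) = _
        rw [hWa ab, Matrix.one_mul]
      rw [Finset.sum_congr rfl fun p _ => h3 p, ← Finset.smul_sum, krausC_sq (hBtpos ab)]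
    rw [Fintype.sum_prod_type, Finset.sum_congr rfl fun ab _ => hterm ab, ← Finset.smul_sum]
    ext v u
    simp only [Matrix.smul_apply, Matrix.sum_apply, Matrix.of_apply, smul_eq_mul]
    rw [Finset.sum_comm]
    have h4 : ∀ a2 : ZMod d, ∑ ab : ZMod d × ZMod d, Bt ab (a2, v) (a2, u)
        = (1 : Matrix (ZMod d × n) (ZMod d × n) ℂ) (a2, v) (a2, u) := by
      intro a2; rw [← hBtsum]; simp [Matrix.sum_apply]
    rw [Finset.sum_congr rfl fun a2 _ => h4 a2]
    by_cases hvu : v = u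
    · subst hvu
      simp only [Matrix.one_apply_eq, Finset.sum_const, Finset.card_univ, ZMod.card,
        nsmul_eq_mul, mul_one]
      exact inv_mul_cancel₀ hd0
    · have : ∀ a2 : ZMod d,
          (1 : Matrix (ZMod d × n) (ZMod d × n) ℂ) (a2, v) (a2, u) = 0 := by
        intro a2
        apply Matrix.one_apply_ne
        simp [Prod.ext_iff, hvu]
      rw [Finset.sum_congr rfl fun a2 _ => this a2]
      simp [Matrix.one_apply, hvu]
  -- action on `Sin`
  have hact : ∀ σ ∈ Sin,
      ∑ j : (ZMod d × ZMod d) × (ZMod d × n), K0 j * σ * (K0 j)ᴴ = L σ := by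
    intro σ hσ
    have hterm : ∀ ab : ZMod d × ZMod d,
        ∑ p : ZMod d × n, K0 (ab, p) * σ * (K0 (ab, p))ᴴ
        = ((d : ℂ)⁻¹ * (d : ℂ)⁻¹) • L σ := by
      intro ab
      have h1 : ∀ p : ZMod d × n, K0 (ab, p) * σ * (K0 (ab, p))ᴴ
          = (d : ℂ)⁻¹ • ((weyl d ab)ᵀ *
              (krausC (hBtpos ab).sqrt p * σ * (krausC (hBtpos ab).sqrt p)ᴴ) *
              ((weyl d ab)ᴴ)ᵀ) := by
        intro p
        simp only [hK0, Matrix.conjTranspose_smul, Matrix.conjTranspose_mul]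
        rw [Matrix.smul_mul, Matrix.smul_mul, Matrix.mul_smul, smul_smul, hccstar, hcc]
        congr 1
        show (weyl d ab)ᵀ * krausC (hBtpos ab).sqrt p * σ *
            ((krausC (hBtpos ab).sqrt p)ᴴ * ((weyl d ab)ᵀ)ᴴ) = _
        have hck : ((weyl d ab)ᵀ)ᴴ = ((weyl d ab)ᴴ)ᵀ := rfl
        rw [hck]
        simp only [Matrix.mul_assoc]
      rw [Finset.sum_congr rfl fun p _ => h1 p, ← Finset.smul_sum, ← Finset.sum_mul,
        ← Finset.mul_sum, krausC_mul (hBtpos ab) σ, hred σ hσ ab]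
      rw [Matrix.transpose_smul, Matrix.transpose_mul, Matrix.transpose_mul,
        Matrix.transpose_transpose]
      rw [Matrix.mul_smul, Matrix.smul_mul, smul_smul]
      congr 1
      rw [← Matrix.mul_assoc, ← Matrix.mul_assoc, hWb ab, Matrix.one_mul,
        Matrix.mul_assoc, hWb ab, Matrix.mul_one]
    rw [Fintype.sum_prod_type, Finset.sum_congr rfl fun ab _ => hterm ab,
      Finset.sum_const, Finset.card_univ, ← Nat.cast_smul_eq_nsmul ℂ, smul_smul]
    have h5 : ((Fintype.card (ZMod d × ZMod d) : ℂ)) * ((d : ℂ)⁻¹ * (d : ℂ)⁻¹) = 1 := by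
      rw [Fintype.card_prod, ZMod.card]
      push_cast
      field_simp
    rw [h5, one_smul]
  -- package everything
  refine ⟨{ toFun := fun X => ∑ j, K0 j * X * (K0 j)ᴴ,
            map_add' := by
              intro X Y
              simp [Matrix.mul_add, Matrix.add_mul, Finset.sum_add_distrib],
            map_smul' := by
              intro r X
              simp [Matrix.mul_smul, Matrix.smul_mul, Finset.smul_sum] }, ?_, ?_⟩
  · refine ⟨Fintype.card ((ZMod d × ZMod d) × (ZMod d × n)),
      fun i => K0 ((Fintype.equivFin _).symm i), ?_, ?_⟩
    · rw [Equiv.sum_comp ((Fintype.equivFin _).symm) (fun j => (K0 j)ᴴ * K0 j)]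
      exact hTP
    · intro X
      show ∑ j, K0 j * X * (K0 j)ᴴ = _
      exact (Equiv.sum_comp ((Fintype.equivFin _).symm)
        (fun j => K0 j * X * (K0 j)ᴴ)).symm
  · intro σ hσ
    show ∑ j, K0 j * σ * (K0 j)ᴴ = L σ
    exact hact σ hσ
end

section
/- Let ρ_{AB} on H_A ⊗ H_B and σ_{AB'} on H_A ⊗ H_{B'} be bipartite density matrices (finite dimensions). Suppose that for every finite decision set X and every family of self-adjoint payoff operators (O^i_A)_{i∈X} on H_A, max over POVMs (P^i_B) on H_B of Σ_i Tr[(O^i_A ⊗ P^i_B) ρ_{AB}] is at least max over POVMs (N^i_{B'}) on H_{B'} of Σ_i Tr[(O^i_A ⊗ N^i_{B'}) σ_{AB'}]. Then for every finite X and every POVM (N^i_{B'}) on H_{B'}, there exists a POVM (M̄^i_B) on H_B such that Tr_B[(1_A ⊗ M̄^i_B) ρ_{AB}] = Tr_{B'}[(1_A ⊗ N^i_{B'}) σ_{AB'}] for all i ∈ X. -/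
open scoped BigOperators Matrix Kronecker ComplexOrder
open Matrix

/-! ### Auxiliary material for the proof of Shmaya's lemma -/

attribute [local instance] Matrix.normedAddCommGroup Matrix.normedSpace

set_option linter.unusedSectionVars false

section Aux

variable {n : Type*} [Fintype n] [DecidableEq n]

lemma aux_nonempty_of_trace_one {M : Matrix n n ℂ} (h : M.trace = 1) : Nonempty n := by
  by_contra hn
  rw [not_nonempty_iff] at hn
  rw [Matrix.trace, Finset.univ_eq_empty, Finset.sum_empty] at h
  exact one_ne_zero h.symm

lemma aux_psd_smul {M : Matrix n n ℂ} (hM : M.PosSemidef) {θ : ℝ} (hθ : 0 ≤ θ) :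
    (θ • M).PosSemidef := by
  refine Matrix.PosSemidef.of_dotProduct_mulVec_nonneg ?_ ?_
  · unfold Matrix.IsHermitian
    rw [Matrix.conjTranspose_smul, star_trivial, hM.isHermitian.eq]
  · intro x
    rw [Matrix.smul_mulVec, dotProduct_smul]
    have h1 := hM.dotProduct_mulVec_nonneg x
    have h2 : (0:ℂ) ≤ (θ:ℂ) := Complex.zero_le_real.2 hθ
    calc (0:ℂ) ≤ (θ:ℂ) * (dotProduct (star x) (M.mulVec x)) := mul_nonneg h2 h1
    _ = θ • (dotProduct (star x) (M.mulVec x)) := by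
        rw [Complex.real_smul]
    _ = _ := rfl

lemma aux_form_single {M : Matrix n n ℂ} (x : n) :
    dotProduct (star (Pi.single x (1:ℂ))) (M.mulVec (Pi.single x 1)) = M x x := by
  simp [dotProduct, Matrix.mulVec, Pi.single_apply, apply_ite, Finset.sum_ite_eq']

lemma aux_diag_le_one {M : Matrix n n ℂ} (hM : M.PosSemidef)
    (hM1 : ((1 : Matrix n n ℂ) - M).PosSemidef) (x : n) : ‖M x x‖ ≤ 1 := by
  have h0 : (0:ℂ) ≤ M x x := by have := hM.dotProduct_mulVec_nonneg (Pi.single x 1); rwa [aux_form_single] at this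
  have h1 : (0:ℂ) ≤ 1 - M x x := by
    have := hM1.dotProduct_mulVec_nonneg (Pi.single x 1)
    rw [aux_form_single] at this
    simpa [Matrix.sub_apply, Matrix.one_apply_eq] using this
  rw [Complex.nonneg_iff] at h0 h1
  simp only [Complex.sub_re, Complex.sub_im, Complex.one_re, Complex.one_im] at h1
  rw [Complex.norm_def, Complex.normSq_apply, ← h0.2]
  simp only [mul_zero, add_zero]
  rw [Real.sqrt_mul_self h0.1]
  linarith [h1.1]

lemma aux_entry_le {M : Matrix n n ℂ} (hM : M.PosSemidef)
    (hM1 : ((1 : Matrix n n ℂ) - M).PosSemidef) (x y : n) : ‖M x y‖ ≤ 1 := by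
  rcases eq_or_ne x y with rfl | hxy
  · exact aux_diag_le_one hM hM1 x
  by_cases ht : M x y = 0
  · simp [ht]
  set t := M x y with htdef
  set c : ℂ := -t / ‖t‖ with hc
  set v : n → ℂ := fun p => c * (if p = x then 1 else 0) + (if p = y then 1 else 0) with hv
  have hform : dotProduct (star v) (M.mulVec v)
      = (starRingEnd ℂ) c * c * M x x + (starRingEnd ℂ) c * M x y + c * M y x + M y y := by
    simp only [hv, dotProduct, Matrix.mulVec, Pi.star_apply, star_add, star_mul',
      RCLike.star_def, apply_ite (starRingEnd ℂ), _root_.map_one, _root_.map_zero]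
    simp only [mul_ite, mul_one, mul_zero, ite_mul, zero_mul, one_mul, add_mul, mul_add,
      Finset.sum_add_distrib, Finset.mul_sum, Finset.sum_ite_eq', Finset.mem_univ, if_true]
    ring
  have hnt : (0:ℝ) < ‖t‖ := norm_pos_iff.2 ht
  have hMyx : M y x = (starRingEnd ℂ) t := by
    conv_lhs => rw [← hM.1.eq]
    rfl
  have hconjt : (starRingEnd ℂ) t * t = ((‖t‖:ℂ)) * ‖t‖ := by
    rw [mul_comm, Complex.mul_conj]
    norm_cast
    rw [Complex.normSq_eq_norm_sq, sq]
  have hcc : (starRingEnd ℂ) c * c = 1 := by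
    rw [hc, map_div₀, map_neg, Complex.conj_ofReal, div_mul_div_comm, neg_mul_neg, hconjt]
    rw [div_self]
    · positivity
  have hct : (starRingEnd ℂ) c * M x y = -‖t‖ := by
    rw [← htdef, hc, map_div₀, map_neg, Complex.conj_ofReal, div_mul_eq_mul_div, neg_mul,
      hconjt, neg_div, mul_div_assoc]
    rw [div_self (by positivity)]
    ring
  have htc : c * M y x = -‖t‖ := by
    rw [hMyx, hc, div_mul_eq_mul_div, neg_mul, mul_comm t, hconjt, neg_div, mul_div_assoc]
    rw [div_self (by positivity)]
    ring
  have hpos := hM.dotProduct_mulVec_nonneg v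
  rw [hform, hcc, hct, htc, one_mul] at hpos
  have hx1 : (M x x).re ≤ 1 := le_trans (Complex.re_le_norm _) (aux_diag_le_one hM hM1 x)
  have hy1 : (M y y).re ≤ 1 := le_trans (Complex.re_le_norm _) (aux_diag_le_one hM hM1 y)
  rw [Complex.nonneg_iff] at hpos
  have hre := hpos.1
  simp only [Complex.add_re, Complex.neg_re, Complex.ofReal_re] at hre
  linarith

lemma aux_isClosed_nonneg : IsClosed {z : ℂ | 0 ≤ z} := by
  have : {z : ℂ | 0 ≤ z} = Complex.re ⁻¹' Set.Ici 0 ∩ Complex.im ⁻¹' {0} := by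
    ext z
    simp [Complex.nonneg_iff, eq_comm]
  rw [this]
  exact (isClosed_Ici.preimage Complex.continuous_re).inter
    (isClosed_singleton.preimage Complex.continuous_im)

lemma aux_povm_isClosed {X : Type*} [Fintype X] :
    IsClosed {P : X → Matrix n n ℂ | IsPOVM P} := by
  have h : {P : X → Matrix n n ℂ | IsPOVM P} =
      ((⋂ i, {P : X → Matrix n n ℂ | (P i)ᴴ = P i}) ∩
        ⋂ i, ⋂ v : n → ℂ,
          {P : X → Matrix n n ℂ | 0 ≤ dotProduct (star v) ((P i).mulVec v)}) ∩
      {P : X → Matrix n n ℂ | ∑ i, P i = 1} := by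
    ext P
    simp only [Set.mem_setOf_eq, Set.mem_inter_iff, Set.mem_iInter, IsPOVM]
    constructor
    · rintro ⟨h1, h2⟩
      exact ⟨⟨fun i => (h1 i).1, fun i v => (h1 i).dotProduct_mulVec_nonneg v⟩, h2⟩
    · rintro ⟨⟨h1, h2⟩, h3⟩
      exact ⟨fun i => Matrix.PosSemidef.of_dotProduct_mulVec_nonneg (h1 i) (h2 i), h3⟩
  rw [h]
  apply IsClosed.inter
  · apply IsClosed.inter
    · refine isClosed_iInter fun i => ?_
      exact isClosed_eq ((continuous_apply i).matrix_conjTranspose) (continuous_apply i)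
    · refine isClosed_iInter fun i => isClosed_iInter fun v => ?_
      have hc : Continuous fun P : X → Matrix n n ℂ =>
          dotProduct (star v) ((P i).mulVec v) :=
        continuous_const.dotProduct ((continuous_apply i).matrix_mulVec continuous_const)
      exact aux_isClosed_nonneg.preimage hc
  · exact isClosed_eq (continuous_finset_sum _ fun i _ => continuous_apply i) continuous_const

lemma aux_one_sub_povm_psd {X : Type*} [Fintype X] [DecidableEq X] {P : X → Matrix n n ℂ}
    (hP : IsPOVM P) (i : X) :
    ((1 : Matrix n n ℂ) - P i).PosSemidef := by
  have : (1 : Matrix n n ℂ) - P i = ∑ j ∈ Finset.univ.erase i, P j := by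
    rw [← hP.2, ← Finset.add_sum_erase _ _ (Finset.mem_univ i)]
    abel
  rw [this]
  exact Finset.sum_induction P _ (fun a b ha hb => ha.add hb) Matrix.PosSemidef.zero
    (fun j _ => hP.1 j)

lemma aux_cube_isCompact : IsCompact {M : Matrix n n ℂ | ∀ x y, ‖M x y‖ ≤ 1} := by
  have h : {M : Matrix n n ℂ | ∀ x y, ‖M x y‖ ≤ 1} =
      Set.univ.pi fun _ : n => Set.univ.pi fun _ : n => Metric.closedBall (0:ℂ) 1 := by
    ext M
    simp only [Set.mem_setOf_eq, Set.mem_univ_pi]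
    refine forall_congr' fun x => ?_
    constructor
    · intro h _
      rw [Set.mem_univ_pi]
      intro y
      rw [Metric.mem_closedBall, dist_zero_right]
      exact h y
    · intro h y
      have h2 := h (Set.mem_univ x)
      rw [Set.mem_univ_pi] at h2
      have := h2 y
      rwa [Metric.mem_closedBall, dist_zero_right] at this
  rw [h]
  exact isCompact_univ_pi fun _ => isCompact_univ_pi fun _ => isCompact_closedBall _ _

lemma aux_povm_isCompact {X : Type*} [Fintype X] [DecidableEq X] :
    IsCompact {P : X → Matrix n n ℂ | IsPOVM P} := by
  have hsub : {P : X → Matrix n n ℂ | IsPOVM P} ⊆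
      Set.univ.pi fun _ : X => {M : Matrix n n ℂ | ∀ x y, ‖M x y‖ ≤ 1} := by
    intro P hP
    rw [Set.mem_univ_pi]
    intro i
    exact fun x y => aux_entry_le (hP.1 i) (aux_one_sub_povm_psd hP i) x y
  exact IsCompact.of_isClosed_subset
    (isCompact_univ_pi fun _ => aux_cube_isCompact) aux_povm_isClosed hsub

lemma aux_povm_convex {X : Type*} [Fintype X] :
    Convex ℝ {P : X → Matrix n n ℂ | IsPOVM P} := by
  rintro P hP Q hQ θ η hθ hη hsum
  constructor
  · intro i
    exact (aux_psd_smul (hP.1 i) hθ).add (aux_psd_smul (hQ.1 i) hη)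
  · have : ∑ i, (θ • P + η • Q) i = θ • ∑ i, P i + η • ∑ i, Q i := by
      simp [Finset.sum_add_distrib, Finset.smul_sum]
    rw [this, hP.2, hQ.2, ← add_smul, hsum, one_smul]

end Aux

section Kron

variable {a b : Type*} [Fintype a] [DecidableEq a] [Fintype b] [DecidableEq b]

lemma aux_ptrB_entry (M : Matrix b b ℂ) (ρ : Matrix (a × b) (a × b) ℂ) (x x' : a) :
    ptrB (((1 : Matrix a a ℂ) ⊗ₖ M) * ρ) x x' = ∑ y, ∑ v, M y v * ρ (x, v) (x', y) := by
  simp only [ptrB, Matrix.of_apply, Matrix.mul_apply, Matrix.kroneckerMap_apply,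
    Matrix.one_apply, Fintype.sum_prod_type, ite_mul, zero_mul, one_mul, mul_comm]
  refine Finset.sum_congr rfl fun y _ => ?_
  rw [Finset.sum_comm]
  simp [Finset.sum_ite_eq', mul_comm]

lemma aux_trace_kron_eq (O : Matrix a a ℂ) (P : Matrix b b ℂ) (ρ : Matrix (a × b) (a × b) ℂ) :
    ((O ⊗ₖ P) * ρ).trace = (O * ptrB (((1 : Matrix a a ℂ) ⊗ₖ P) * ρ)).trace := by
  simp only [Matrix.trace, Matrix.diag_apply, Matrix.mul_apply, aux_ptrB_entry,
    Matrix.kroneckerMap_apply, Fintype.sum_prod_type, Finset.mul_sum, Finset.sum_mul]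
  refine Finset.sum_congr rfl fun x _ => ?_
  rw [Finset.sum_comm]
  refine Finset.sum_congr rfl fun u _ => ?_
  refine Finset.sum_congr rfl fun y _ => ?_
  refine Finset.sum_congr rfl fun v _ => ?_
  ring

lemma aux_ptrB_herm {M : Matrix b b ℂ} {ρ : Matrix (a × b) (a × b) ℂ}
    (hM : M.IsHermitian) (hρ : ρ.IsHermitian) :
    (ptrB (((1 : Matrix a a ℂ) ⊗ₖ M) * ρ)).IsHermitian := by
  rw [Matrix.IsHermitian]
  ext x x'
  rw [Matrix.conjTranspose_apply, aux_ptrB_entry, aux_ptrB_entry]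
  calc star (∑ y, ∑ v, M y v * ρ (x', v) (x, y))
      = ∑ y, ∑ v, M v y * ρ (x, y) (x', v) := by
        rw [star_sum]
        refine Finset.sum_congr rfl fun y _ => ?_
        rw [star_sum]
        refine Finset.sum_congr rfl fun v _ => ?_
        rw [star_mul', hM.apply, hρ.apply]
    _ = ∑ y, ∑ v, M y v * ρ (x, v) (x', y) := Finset.sum_comm

/-- `M ↦ ptrB ((1 ⊗ M) * ρ)` as a real-linear map. -/
noncomputable def auxPhiL (ρ : Matrix (a × b) (a × b) ℂ) : Matrix b b ℂ →ₗ[ℝ] Matrix a a ℂ where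
  toFun M := ptrB (((1 : Matrix a a ℂ) ⊗ₖ M) * ρ)
  map_add' M N := by
    ext x x'
    simp only [aux_ptrB_entry, Matrix.add_apply, add_mul, Finset.sum_add_distrib]
  map_smul' r M := by
    ext x x'
    simp only [aux_ptrB_entry, Matrix.smul_apply, RingHom.id_apply, Finset.smul_sum,
      smul_mul_assoc]

@[simp] lemma auxPhiL_apply (ρ : Matrix (a × b) (a × b) ℂ) (M : Matrix b b ℂ) :
    auxPhiL ρ M = ptrB (((1 : Matrix a a ℂ) ⊗ₖ M) * ρ) := rfl

lemma auxPhiL_continuous (ρ : Matrix (a × b) (a × b) ℂ) : Continuous (auxPhiL ρ) := by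
  apply continuous_matrix
  intro x x'
  simp only [auxPhiL, LinearMap.coe_mk, AddHom.coe_mk, aux_ptrB_entry]
  exact continuous_finset_sum _ fun y _ => continuous_finset_sum _ fun v _ =>
    (((continuous_apply_apply y v)).mul continuous_const)

end Kron

section Rep

variable {a X : Type*} [Fintype a] [DecidableEq a] [Fintype X] [DecidableEq X]

noncomputable def auxE1 (i : X) (x y : a) : X → Matrix a a ℂ :=
  Pi.single i (Matrix.single x y 1)

noncomputable def auxEI (i : X) (x y : a) : X → Matrix a a ℂ :=
  Pi.single i (Matrix.single x y Complex.I)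

lemma aux_decomp (A : X → Matrix a a ℂ) :
    A = ∑ i, ∑ x, ∑ y, ((A i x y).re • auxE1 i x y + (A i x y).im • auxEI i x y) := by
  funext j
  ext u v
  simp only [Finset.sum_apply, Matrix.sum_apply, Pi.add_apply, Pi.smul_apply,
    Matrix.smul_apply, auxE1, auxEI, Pi.single_apply, Matrix.single, Matrix.of_apply]
  simp only [Matrix.add_apply, Matrix.smul_apply, apply_ite (fun m : Matrix a a ℂ => m u v),
    Matrix.zero_apply, Matrix.of_apply, smul_ite, smul_zero, ite_and]
  simp only [Finset.sum_add_distrib, Finset.sum_ite_eq, Finset.sum_ite_eq',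
    Finset.mem_univ, if_true]
  simp only [Complex.real_smul, smul_eq_mul, mul_one]
  rw [← Complex.re_add_im (A j u v)]
  simp

noncomputable def auxBmat (f : (X → Matrix a a ℂ) →L[ℝ] ℝ) : X → Matrix a a ℂ :=
  fun i => Matrix.of fun x y => (f (auxE1 i x y) : ℂ) + (f (auxEI i x y) : ℂ) * Complex.I

lemma aux_f_eq (f : (X → Matrix a a ℂ) →L[ℝ] ℝ) (A : X → Matrix a a ℂ) :
    f A = ∑ i, ∑ x, ∑ y,
      ((A i x y).re * f (auxE1 i x y) + (A i x y).im * f (auxEI i x y)) := by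
  conv_lhs => rw [aux_decomp A]
  rw [map_sum]
  refine Finset.sum_congr rfl fun i _ => ?_
  rw [map_sum]
  refine Finset.sum_congr rfl fun x _ => ?_
  rw [map_sum]
  refine Finset.sum_congr rfl fun y _ => ?_
  rw [map_add, _root_.map_smul, _root_.map_smul, smul_eq_mul, smul_eq_mul]

lemma aux_trace_rep (f : (X → Matrix a a ℂ) →L[ℝ] ℝ) (A : X → Matrix a a ℂ) :
    (∑ i, ((auxBmat f i)ᴴ * A i).trace).re = f A := by
  rw [aux_f_eq f A]
  rw [Complex.re_sum]
  refine Finset.sum_congr rfl fun i _ => ?_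
  simp only [Matrix.trace, Matrix.diag_apply, Matrix.mul_apply, Matrix.conjTranspose_apply,
    auxBmat, Matrix.of_apply]
  rw [Complex.re_sum]
  rw [Finset.sum_comm]
  refine Finset.sum_congr rfl fun x _ => ?_
  rw [Complex.re_sum]
  refine Finset.sum_congr rfl fun y _ => ?_
  simp [Complex.mul_re, Complex.add_re, Complex.add_im, Complex.mul_im]
  ring

noncomputable def auxOmat (f : (X → Matrix a a ℂ) →L[ℝ] ℝ) : X → Matrix a a ℂ :=
  fun i => (2:ℂ)⁻¹ • ((auxBmat f i)ᴴ + auxBmat f i)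

lemma auxOmat_herm (f : (X → Matrix a a ℂ) →L[ℝ] ℝ) (i : X) :
    (auxOmat f i).IsHermitian := by
  unfold auxOmat Matrix.IsHermitian
  rw [Matrix.conjTranspose_smul, Matrix.conjTranspose_add, Matrix.conjTranspose_conjTranspose]
  rw [add_comm]
  congr 1
  simp

lemma aux_trace_O_re {A : Matrix a a ℂ} (hA : A.IsHermitian) (B : Matrix a a ℂ) :
    (((2:ℂ)⁻¹ • (Bᴴ + B)) * A).trace.re = (Bᴴ * A).trace.re := by
  have key : (B * A).trace = star ((Bᴴ * A).trace) := by
    rw [← Matrix.trace_conjTranspose, Matrix.conjTranspose_mul,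
      Matrix.conjTranspose_conjTranspose, hA.eq, Matrix.trace_mul_comm]
  rw [Matrix.smul_mul, Matrix.trace_smul, Matrix.add_mul, Matrix.trace_add, key]
  set z := (Bᴴ * A).trace
  simp only [smul_eq_mul, Complex.mul_re, Complex.add_re, Complex.add_im, Complex.inv_re,
    Complex.inv_im, Complex.conj_re, Complex.conj_im, RCLike.star_def]
  norm_num
  ring

lemma aux_f_eval_herm (f : (X → Matrix a a ℂ) →L[ℝ] ℝ) (A : X → Matrix a a ℂ)
    (hA : ∀ i, (A i).IsHermitian) :
    (∑ i, (auxOmat f i * A i).trace).re = f A := by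
  rw [← aux_trace_rep f A, Complex.re_sum, Complex.re_sum]
  exact Finset.sum_congr rfl fun i _ => aux_trace_O_re (hA i) (auxBmat f i)

end Rep

/-- Shmaya's lemma (Lemma 1). -/
theorem stmt11 {a b b' : Type*} [Fintype a] [DecidableEq a]
    [Fintype b] [DecidableEq b] [Fintype b'] [DecidableEq b']
    (ρ : Matrix (a × b) (a × b) ℂ) (hρ : IsDensity ρ)
    (σ : Matrix (a × b') (a × b') ℂ) (hσ : IsDensity σ)
    (hord : ∀ (X : Type) [Fintype X] (O : X → Matrix a a ℂ),
      (∀ i, (O i).IsHermitian) → gameSup σ O ≤ gameSup ρ O) :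
    ∀ (X : Type) [Fintype X] (N : X → Matrix b' b' ℂ), IsPOVM N →
      ∃ M : X → Matrix b b ℂ, IsPOVM M ∧
        ∀ i, ptrB (((1 : Matrix a a ℂ) ⊗ₖ M i) * ρ) =
          ptrB (((1 : Matrix a a ℂ) ⊗ₖ N i) * σ) := by

  intro X _ N hN
  classical
  -- nonemptiness facts
  have hab' : Nonempty (a × b') := aux_nonempty_of_trace_one hσ.2
  have hb' : Nonempty b' := ⟨hab'.some.2⟩
  have hXne : Nonempty X := by
    by_contra h
    rw [not_nonempty_iff] at h
    have h2 := hN.2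
    rw [Finset.univ_eq_empty, Finset.sum_empty] at h2
    have := congr_fun (congr_fun h2 hb'.some) hb'.some
    rw [Matrix.zero_apply, Matrix.one_apply_eq] at this
    exact zero_ne_one this
  obtain ⟨i₀⟩ := hXne
  -- the linear map P ↦ (i ↦ ptrB ((1 ⊗ P i) ρ))
  set ΦL : (X → Matrix b b ℂ) →ₗ[ℝ] (X → Matrix a a ℂ) :=
    LinearMap.pi (fun i : X => (auxPhiL ρ).comp (LinearMap.proj i)) with hΦL
  have hΦapp : ∀ (P : X → Matrix b b ℂ) (i : X),
      ΦL P i = ptrB (((1 : Matrix a a ℂ) ⊗ₖ P i) * ρ) := fun P i => rfl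
  set C : Set (X → Matrix a a ℂ) := ΦL '' {P | IsPOVM P} with hC
  set t : X → Matrix a a ℂ := fun i => ptrB (((1 : Matrix a a ℂ) ⊗ₖ N i) * σ) with htdef
  by_cases htC : t ∈ C
  · obtain ⟨M, hM, hMt⟩ := htC
    exact ⟨M, hM, fun i => (hΦapp M i).symm.trans (congr_fun hMt i)⟩
  exfalso
  -- separation
  have hconv : Convex ℝ C := (aux_povm_convex).linear_image ΦL
  have hΦcont : Continuous ΦL := by
    apply continuous_pi
    intro i
    exact (auxPhiL_continuous ρ).comp (continuous_apply i)
  have hcomp : IsCompact C := (aux_povm_isCompact).image hΦcont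
  have hclosed : IsClosed C := hcomp.isClosed
  haveI : LocallyConvexSpace ℝ (X → Matrix a a ℂ) := NormedSpace.toLocallyConvexSpace
  obtain ⟨f, u, hfu, huf⟩ := geometric_hahn_banach_closed_point hconv hclosed htC
  set O : X → Matrix a a ℂ := auxOmat f with hO
  have hOherm : ∀ i, (O i).IsHermitian := auxOmat_herm f
  -- evaluation of f on images of POVMs
  have heval : ∀ P : X → Matrix b b ℂ, (∀ i, (P i).PosSemidef) →
      (∑ i, ((O i ⊗ₖ P i) * ρ).trace).re = f (ΦL P) := by
    intro P hP
    have h1 : (∑ i, ((O i ⊗ₖ P i) * ρ).trace) = ∑ i, (O i * (ΦL P i)).trace := by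
      refine Finset.sum_congr rfl fun i _ => ?_
      rw [hΦapp, aux_trace_kron_eq]
    rw [h1]
    exact aux_f_eval_herm f (ΦL P)
      (fun i => aux_ptrB_herm (hP i).isHermitian hρ.1.isHermitian)
  have hevalσ : (∑ i, ((O i ⊗ₖ N i) * σ).trace).re = f t := by
    have h1 : (∑ i, ((O i ⊗ₖ N i) * σ).trace) = ∑ i, (O i * t i).trace := by
      refine Finset.sum_congr rfl fun i _ => ?_
      rw [htdef, aux_trace_kron_eq]
    rw [h1]
    exact aux_f_eval_herm f t
      (fun i => aux_ptrB_herm (hN.1 i).isHermitian hσ.1.isHermitian)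
  -- the trivial POVM
  set P₀ : X → Matrix b b ℂ := fun i => if i = i₀ then 1 else 0 with hP₀def
  have hP₀ : IsPOVM P₀ := by
    constructor
    · intro i
      by_cases h : i = i₀
      · rw [hP₀def]
        simp only [h, if_true]
        exact Matrix.PosSemidef.one
      · rw [hP₀def]
        simp only [h, if_false]
        exact Matrix.PosSemidef.zero
    · rw [hP₀def]
      simp [Finset.sum_ite_eq']
  -- gameSup ρ O ≤ u
  have h1 : gameSup ρ O ≤ u := by
    unfold gameSup
    apply csSup_le
    · exact ⟨_, P₀, hP₀, rfl⟩
    · rintro s ⟨P, hP, rfl⟩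
      rw [heval P hP.1]
      exact (hfu _ ⟨P, hP, rfl⟩).le
  -- f t ≤ gameSup σ O
  have h2 : f t ≤ gameSup σ O := by
    rw [← hevalσ]
    unfold gameSup
    apply le_csSup
    · -- bounded above
      set g : (X → Matrix b' b' ℂ) → ℝ :=
        fun P => (∑ i, ((O i ⊗ₖ P i) * σ).trace).re with hg
      have hgcont : Continuous g := by
        apply Complex.continuous_re.comp
        apply continuous_finset_sum
        intro i _
        apply Continuous.matrix_trace
        apply Continuous.matrix_mul _ continuous_const
        apply continuous_matrix
        intro p q
        simp only [Matrix.kroneckerMap_apply]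
        exact continuous_const.mul ((continuous_apply i).matrix_elem _ _)
      have hset : {s | ∃ P : X → Matrix b' b' ℂ, IsPOVM P ∧
          s = (∑ i, ((O i ⊗ₖ P i) * σ).trace).re} = g '' {P | IsPOVM P} := by
        ext s
        constructor
        · rintro ⟨P, hP, rfl⟩
          exact ⟨P, hP, rfl⟩
        · rintro ⟨P, hP, rfl⟩
          exact ⟨P, hP, rfl⟩
      rw [hset]
      exact ((aux_povm_isCompact).image hgcont).bddAbove
    · exact ⟨N, hN, rfl⟩
  have h3 := hord X O hOherm
  linarith
end

section
/- For d ≥ 2 and p ∈ (0, 1], the isotropic state ω^p = p Ψ⁺ + (1−p) 1/d² on H ⊗ H (dim H = d, Ψ⁺ a maximally entangled pure state projector) has local state space S_Y(ω^p) = { p σ + (1−p) 1/d : σ a density matrix on H }, and this set contains d² linearly independent density matrices (i.e. it is a complete state space). -/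
open scoped BigOperators Matrix Kronecker ComplexOrder
open Matrix

/-- The isotropic state `ω^p = p Ψ⁺ + (1-p) 1/d²`. -/
noncomputable def isotropic (d : ℕ) [NeZero d] (p : ℝ) :
    Matrix (ZMod d × ZMod d) (ZMod d × ZMod d) ℂ :=
  (p : ℂ) • maxEnt d + (((1 - p) / (d ^ 2) : ℝ) : ℂ) • 1



theorem one_sub_psd {n : Type*} [Fintype n] [DecidableEq n] {σ : Matrix n n ℂ}
    (h : σ.PosSemidef) (ht : σ.trace = 1) : ((1 : Matrix n n ℂ) - σ).PosSemidef := by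
  have hh := h.isHermitian
  have hspec := hh.spectral_theorem
  set U : Matrix n n ℂ := (hh.eigenvectorUnitary : Matrix n n ℂ) with hU
  have hUU : U * star U = 1 := (Matrix.mem_unitaryGroup_iff).mp hh.eigenvectorUnitary.2
  have hUU' : star U * U = 1 := (Matrix.mem_unitaryGroup_iff').mp hh.eigenvectorUnitary.2
  have htr : ∑ i, hh.eigenvalues i = 1 := by
    have h2 : σ.trace = ∑ i, (hh.eigenvalues i : ℂ) := by
      conv_lhs => rw [hspec]
      rw [Unitary.conjStarAlgAut_apply]
      rw [Matrix.trace_mul_cycle, hUU', one_mul, Matrix.trace_diagonal]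
      simp
    rw [ht] at h2
    have := congrArg Complex.re h2.symm
    simpa using this
  have hle : ∀ i, hh.eigenvalues i ≤ 1 := by
    intro i
    rw [← htr]
    exact Finset.single_le_sum (fun j _ => h.eigenvalues_nonneg j) (Finset.mem_univ i)
  have hD : ((1 : Matrix n n ℂ) - diagonal (RCLike.ofReal ∘ hh.eigenvalues)).PosSemidef := by
    rw [← Matrix.diagonal_one, Matrix.diagonal_sub]
    refine Matrix.PosSemidef.diagonal ?_
    intro i
    simp only [Pi.sub_apply, Pi.one_apply, Function.comp_apply]
    rw [Complex.le_def]
    constructor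
    · simp [hle i]
    · simp
  have key : (1 : Matrix n n ℂ) - σ = U * ((1 : Matrix n n ℂ) - diagonal (RCLike.ofReal ∘ hh.eigenvalues)) * Uᴴ := by
    rw [Matrix.mul_sub, Matrix.sub_mul, mul_one, ← Matrix.star_eq_conjTranspose, hUU]
    conv_lhs => rw [hspec]
    rfl
  rw [key]
  exact hD.mul_mul_conjTranspose_same U

lemma psd_smul' {n : Type*} [Fintype n] {M : Matrix n n ℂ} (h : M.PosSemidef)
    {c : ℂ} (hc : 0 ≤ c) : (c • M).PosSemidef := by
  have him : c.im = 0 := by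
    have := (Complex.le_def.mp hc).2; simpa using this.symm
  constructor
  · unfold Matrix.IsHermitian
    rw [Matrix.conjTranspose_smul, h.1.eq]
    congr 1
    exact Complex.conj_eq_iff_im.mpr him
  · intro x
    refine le_of_le_of_eq (mul_nonneg hc (h.2 x)) ?_
    simp only [Matrix.smul_apply, smul_eq_mul, Finsupp.mul_sum]
    refine Finsupp.sum_congr fun i _ => Finsupp.sum_congr fun j _ => ?_
    ring

noncomputable def ccc (d : ℕ) (i j : ZMod d) : ℂ := if i.val < j.val then 1 else -Complex.I

noncomputable def vvv (d : ℕ) [NeZero d] (i j : ZMod d) : ZMod d → ℂ :=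
  fun a => if a = i then 1 else if a = j then ccc d i j else 0

noncomputable def tfac (d : ℕ) (i j : ZMod d) : ℂ := if i = j then 1 else (2:ℂ)⁻¹

noncomputable def sigma (d : ℕ) [NeZero d] (i j : ZMod d) : Matrix (ZMod d) (ZMod d) ℂ :=
  tfac d i j • Matrix.vecMulVec (vvv d i j) (star (vvv d i j))

lemma sigma_apply (d : ℕ) [NeZero d] (i j a b : ZMod d) :
    sigma d i j a b = tfac d i j * (vvv d i j a * (starRingEnd ℂ) (vvv d i j b)) := by
  simp [sigma, Matrix.vecMulVec_apply, Pi.star_apply]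

lemma sigma_psd (d : ℕ) [NeZero d] (i j : ZMod d) : (sigma d i j).PosSemidef := by
  unfold sigma
  have h1 : (Matrix.vecMulVec (vvv d i j) (star (vvv d i j))).PosSemidef := by
    rw [Matrix.vecMulVec_eq Unit, ← Matrix.conjTranspose_replicateCol]
    exact Matrix.posSemidef_self_mul_conjTranspose _
  refine psd_smul' h1 ?_
  unfold tfac
  split
  · norm_num
  · rw [Complex.le_def]; norm_num

lemma normsq_ccc (d : ℕ) (i j : ZMod d) : ccc d i j * (starRingEnd ℂ) (ccc d i j) = 1 := by
  unfold ccc; split <;> simp [Complex.mul_conj]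

lemma sigma_trace (d : ℕ) [NeZero d] (i j : ZMod d) : (sigma d i j).trace = 1 := by
  by_cases h : i = j
  · subst h
    simp only [Matrix.trace, Matrix.diag, sigma_apply, tfac, if_pos rfl, one_mul, vvv]
    have : ∀ a, ((if a = i then (1:ℂ) else if a = i then ccc d i i else 0) *
        (starRingEnd ℂ) (if a = i then 1 else if a = i then ccc d i i else 0)) = if a = i then 1 else 0 := by
      intro a; by_cases hj : a = i <;> simp [hj]
    simp [this, Finset.sum_ite_eq', Finset.mem_univ, if_true]
  · simp only [Matrix.trace, Matrix.diag, sigma_apply, tfac, if_neg h]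
    have : ∀ a, vvv d i j a * (starRingEnd ℂ) (vvv d i j a)
        = (if a = i then 1 else 0) + (if a = j then 1 else 0) := by
      intro a
      unfold vvv
      by_cases hi : a = i
      · have hij : ¬ (i = j) := h
        simp [hi, hij]
      · by_cases hj : a = j
        · have hji : ¬ (j = i) := fun e => h e.symm
          simp [hi, hj, hji, normsq_ccc]
        · simp [hi, hj]
    simp only [this, mul_add, Finset.sum_add_distrib, mul_ite, mul_one, mul_zero,
      Finset.sum_ite_eq', Finset.mem_univ, if_true]
    norm_num

lemma sigma_offdiag_entry (d : ℕ) [NeZero d] (g : ZMod d × ZMod d → ℂ) (a b : ZMod d)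
    (hab : a ≠ b) :
    (∑ ij : ZMod d × ZMod d, g ij • sigma d ij.1 ij.2) a b
      = g (a,b) * ((starRingEnd ℂ) (ccc d a b) * 2⁻¹) + g (b,a) * (ccc d b a * 2⁻¹) := by
  rw [Matrix.sum_apply]
  simp only [Matrix.smul_apply, smul_eq_mul]
  have key : ∀ ij ∈ (Finset.univ : Finset (ZMod d × ZMod d)),
      g ij * sigma d ij.1 ij.2 a b =
      (if ij = (a,b) then g ij * ((starRingEnd ℂ) (ccc d a b) * 2⁻¹) else 0) +
      (if ij = (b,a) then g ij * (ccc d b a * 2⁻¹) else 0) := by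
    rintro ij -
    by_cases h1 : ij = (a, b)
    · have hba : ¬ ((a, b) = (b, a)) := by
        simp only [Prod.mk.injEq]; rintro ⟨h, -⟩; exact hab h
      rw [h1, if_pos rfl, if_neg hba, add_zero]
      have : sigma d (a, b).1 (a, b).2 a b = (starRingEnd ℂ) (ccc d a b) * 2⁻¹ := by
        rw [sigma_apply]
        have hvb : vvv d a b b = ccc d a b := by simp [vvv, (Ne.symm hab : ¬ b = a)]
        have hva : vvv d a b a = 1 := by simp [vvv]
        simp only [hva, hvb, tfac, if_neg hab]
        ring
      rw [this]
    · by_cases h2 : ij = (b, a)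
      · have hne : ¬ ((b, a) = (a, b)) := by
          simp only [Prod.mk.injEq]; rintro ⟨h, -⟩; exact hab h.symm
        rw [h2, if_neg hne, if_pos rfl, zero_add]
        have : sigma d (b, a).1 (b, a).2 a b = ccc d b a * 2⁻¹ := by
          rw [sigma_apply]
          have hva : vvv d b a a = ccc d b a := by simp [vvv, hab]
          have hvb : vvv d b a b = 1 := by simp [vvv]
          simp only [hva, hvb, tfac, if_neg (Ne.symm hab)]
          simp
          ring
        rw [this]
      · obtain ⟨i, j⟩ := ij
        rw [if_neg h1, if_neg h2, add_zero, sigma_apply]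
        have hz : vvv d i j a * (starRingEnd ℂ) (vvv d i j b) = 0 := by
          unfold vvv
          by_cases hai : a = i
          · subst hai
            by_cases hbj : b = j
            · exact absurd (by simp [hbj] : (a, j) = (a, b)) h1
            · have hbi : ¬ b = a := fun e => hab e.symm
              simp [hbi, hbj]
          · by_cases haj : a = j
            · subst haj
              by_cases hbi : b = i
              · exact absurd (by simp [hbi] : (i, a) = (b, a)) h2
              · have hbj : ¬ b = a := fun e => hab e.symm
                simp [hai, hbi, hbj]
            · simp [hai, haj]
        rw [hz, mul_zero, mul_zero]
  rw [Finset.sum_congr rfl key, Finset.sum_add_distrib]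
  simp [Finset.sum_ite_eq', Finset.mem_univ]

lemma sigma_diag_entry (d : ℕ) [NeZero d] (g : ZMod d × ZMod d → ℂ)
    (hoff : ∀ ij : ZMod d × ZMod d, ij.1 ≠ ij.2 → g ij = 0) (a : ZMod d) :
    (∑ ij : ZMod d × ZMod d, g ij • sigma d ij.1 ij.2) a a = g (a, a) := by
  rw [Matrix.sum_apply]
  simp only [Matrix.smul_apply, smul_eq_mul]
  have key : ∀ ij ∈ (Finset.univ : Finset (ZMod d × ZMod d)),
      g ij * sigma d ij.1 ij.2 a a = if ij = (a, a) then g ij else 0 := by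
    rintro ⟨i, j⟩ -
    by_cases hij : i = j
    · subst hij
      by_cases hia : i = a
      · subst hia
        rw [if_pos rfl, sigma_apply]
        have : vvv d i i i = 1 := by simp [vvv]
        simp [this, tfac]
      · rw [if_neg (by simp [Prod.ext_iff, hia]), sigma_apply]
        have : vvv d i i a = 0 := by
          have : ¬ a = i := fun e => hia e.symm
          simp [vvv, this]
        simp [this]
    · rw [if_neg (by simp [Prod.ext_iff]; intro h1 h2; exact hij (h1.trans h2.symm)),
        hoff (i, j) hij, zero_mul]
  rw [Finset.sum_congr rfl key]
  simp

lemma sigma_linIndep (d : ℕ) [NeZero d] :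
    LinearIndependent ℂ (fun ij : ZMod d × ZMod d => sigma d ij.1 ij.2) := by
  rw [Fintype.linearIndependent_iff]
  intro g hg
  have hoff : ∀ ij : ZMod d × ZMod d, ij.1 ≠ ij.2 → g ij = 0 := by
    have main : ∀ a b : ZMod d, a.val < b.val → g (a, b) = 0 ∧ g (b, a) = 0 := by
      intro a b hv
      have hab : a ≠ b := fun e => by subst e; exact lt_irrefl _ hv
      have e1 := congrArg (fun M => M a b) hg
      have e2 := congrArg (fun M => M b a) hg
      simp only [Matrix.zero_apply] at e1 e2
      rw [sigma_offdiag_entry d g a b hab] at e1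
      rw [sigma_offdiag_entry d g b a (Ne.symm hab)] at e2
      have hc1 : ccc d a b = 1 := if_pos hv
      have hc2 : ccc d b a = -Complex.I := if_neg (by omega)
      rw [hc1, hc2] at e1 e2
      simp only [RingHom.map_one, Complex.conj_neg_I, map_neg, Complex.conj_I, neg_neg] at e1 e2
      constructor
      · linear_combination e1 + e2
      · linear_combination Complex.I * e1 - Complex.I * e2 + (g (b, a)) * Complex.I_mul_I
    rintro ⟨i, j⟩ hij
    rcases lt_trichotomy i.val j.val with h | h | h
    · exact (main i j h).1
    · exact absurd (ZMod.val_injective d h) hij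
    · exact (main j i h).2
  intro ij
  obtain ⟨i, j⟩ := ij
  by_cases hij : i = j
  · subst hij
    have := sigma_diag_entry d g hoff i
    rw [hg] at this
    simpa using this.symm
  · exact hoff (i, j) hij

theorem ptrA_iso (d : ℕ) [NeZero d] (p : ℝ) (P : Matrix (ZMod d) (ZMod d) ℂ) :
    ptrA ((P ⊗ₖ (1 : Matrix (ZMod d) (ZMod d) ℂ)) * isotropic d p)
    = ((p : ℂ) * (d : ℂ)⁻¹) • Pᵀ + ((((1 - p) / d^2 : ℝ) : ℂ) * P.trace) • 1 := by
  ext y y'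
  simp only [ptrA, isotropic, maxEnt, Matrix.of_apply, Matrix.mul_apply, Matrix.add_apply,
    Matrix.smul_apply, Matrix.kroneckerMap_apply, Fintype.sum_prod_type, Matrix.one_apply,
    Matrix.trace, Matrix.diag, Matrix.transpose_apply, smul_eq_mul]
  simp only [mul_ite, mul_one, mul_zero, ite_mul, zero_mul, Finset.sum_ite_eq,
    Finset.sum_ite_eq', Finset.mem_univ, if_true, Prod.mk.injEq, Finset.mul_sum]
  simp only [mul_add, Finset.sum_add_distrib]
  congr 1
  · simp [mul_ite, ite_and, Finset.sum_ite_eq, Finset.sum_ite_eq', mul_comm]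
  · by_cases h : y = y' <;> simp [h, mul_comm]


lemma trace_ptrA {a b : Type*} [Fintype a] [Fintype b] (M : Matrix (a × b) (a × b) ℂ) :
    (ptrA M).trace = M.trace := by
  simp [Matrix.trace, Matrix.diag, ptrA, Fintype.sum_prod_type]
  rw [Finset.sum_comm]

lemma trace_kron_iso (d : ℕ) [NeZero d] (p : ℝ) (P : Matrix (ZMod d) (ZMod d) ℂ) :
    ((P ⊗ₖ (1 : Matrix (ZMod d) (ZMod d) ℂ)) * isotropic d p).trace
      = P.trace * (d : ℂ)⁻¹ := by
  have hd0 : (d : ℂ) ≠ 0 := Nat.cast_ne_zero.mpr (NeZero.ne d)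
  rw [← trace_ptrA, ptrA_iso]
  simp only [Matrix.trace_add, Matrix.trace_smul, Matrix.trace_transpose, Matrix.trace_one,
    smul_eq_mul]
  rw [ZMod.card]
  push_cast
  field_simp
  ring


/-- The local state space of the isotropic state, and its completeness. -/
theorem stmt16 (d : ℕ) [NeZero d] (hd : 2 ≤ d) (p : ℝ) (hp0 : 0 < p) (hp1 : p ≤ 1) :
    SB (isotropic d p) =
      {τ | ∃ σ : Matrix (ZMod d) (ZMod d) ℂ, IsDensity σ ∧
        τ = (p : ℂ) • σ + (((1 - p) / d : ℝ) : ℂ) • 1} ∧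
    ∃ f : Fin (d ^ 2) → Matrix (ZMod d) (ZMod d) ℂ,
      (∀ k, f k ∈ SB (isotropic d p)) ∧ LinearIndependent ℂ f ∧ ∀ k, IsDensity (f k) := by
  have hd0 : (d : ℂ) ≠ 0 := Nat.cast_ne_zero.mpr (NeZero.ne d)
  have hdR0 : (0:ℝ) < d := by
    have := NeZero.pos d; exact_mod_cast this
  have hseteq : SB (isotropic d p) =
      {τ | ∃ σ : Matrix (ZMod d) (ZMod d) ℂ, IsDensity σ ∧
        τ = (p : ℂ) • σ + (((1 - p) / d : ℝ) : ℂ) • 1} := by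
    ext τ
    constructor
    · rintro ⟨P, r, hP, hP1, hr, htr, hτ⟩
      rw [trace_kron_iso] at htr
      have hrne : (r : ℂ) ≠ 0 := by exact_mod_cast ne_of_gt hr
      have htrP : P.trace = (r : ℂ) * d := by
        field_simp at htr
        linear_combination htr
      rw [ptrA_iso, htrP] at hτ
      refine ⟨((((d : ℝ) * r)⁻¹ : ℝ) : ℂ) • Pᵀ, ⟨?_, ?_⟩, ?_⟩
      · have h0 : (0:ℝ) ≤ ((d : ℝ) * r)⁻¹ := by positivity
        exact psd_smul' hP.transpose (by rw [Complex.zero_le_real]; exact h0)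
      · rw [Matrix.trace_smul, Matrix.trace_transpose, htrP]
        push_cast
        field_simp
        rw [smul_eq_mul, one_div, inv_mul_cancel₀ (mul_ne_zero hd0 hrne)]
      · rw [hτ, smul_add, smul_smul, smul_smul, smul_smul]
        congr 1
        · congr 1
          push_cast
          rw [mul_inv]
          ring
        · congr 1
          push_cast
          field_simp
    · rintro ⟨σ, ⟨hσpsd, hσtr⟩, rfl⟩
      refine ⟨σᵀ, (d : ℝ)⁻¹, hσpsd.transpose, ?_, by positivity, ?_, ?_⟩
      · have h1 : ((1 : Matrix (ZMod d) (ZMod d) ℂ) - σ).PosSemidef := one_sub_psd hσpsd hσtr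
        have := h1.transpose
        rwa [Matrix.transpose_sub, Matrix.transpose_one] at this
      · rw [trace_kron_iso, Matrix.trace_transpose, hσtr, one_mul]
        push_cast
        ring
      · rw [ptrA_iso, Matrix.transpose_transpose, Matrix.trace_transpose, hσtr, mul_one,
          smul_add, smul_smul, smul_smul]
        congr 1
        · congr 1
          push_cast
          field_simp
        · congr 1
          push_cast
          field_simp
  refine ⟨hseteq, ?_⟩
  have hcard : Fintype.card (ZMod d × ZMod d) = d ^ 2 := by
    simp [ZMod.card]; ring
  let e : Fin (d ^ 2) ≃ ZMod d × ZMod d := (Fintype.equivFinOfCardEq hcard).symm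
  set c1 : ℂ := (((1 - p) / d : ℝ) : ℂ) with hc1def
  have hc1 : 0 ≤ c1 := by
    rw [hc1def, Complex.zero_le_real]
    have : 0 ≤ 1 - p := by linarith
    positivity
  have hp' : 0 ≤ (p : ℂ) := by rw [Complex.zero_le_real]; exact le_of_lt hp0
  have hpne : (p : ℂ) ≠ 0 := by exact_mod_cast ne_of_gt hp0
  set v : ZMod d × ZMod d → Matrix (ZMod d) (ZMod d) ℂ :=
    fun ij => (p : ℂ) • sigma d ij.1 ij.2 + c1 • 1 with hvdef
  have hvtrace : ∀ ij, (v ij).trace = 1 := by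
    intro ij
    rw [hvdef]
    simp only [Matrix.trace_add, Matrix.trace_smul, sigma_trace, Matrix.trace_one, smul_eq_mul,
      mul_one, ZMod.card, hc1def]
    push_cast
    field_simp
    ring
  have hvdens : ∀ ij, IsDensity (v ij) := by
    intro ij
    refine ⟨(psd_smul' (sigma_psd d ij.1 ij.2) hp').add (psd_smul' Matrix.PosSemidef.one hc1),
      hvtrace ij⟩
  have hvmem : ∀ ij, v ij ∈ SB (isotropic d p) := by
    intro ij
    rw [hseteq]
    exact ⟨sigma d ij.1 ij.2, ⟨sigma_psd d ij.1 ij.2, sigma_trace d ij.1 ij.2⟩, rfl⟩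
  have hvli : LinearIndependent ℂ v := by
    rw [Fintype.linearIndependent_iff]
    intro g hg
    have hsum : ∑ ij, g ij = 0 := by
      have := congrArg Matrix.trace hg
      rw [Matrix.trace_sum] at this
      simp only [Matrix.trace_smul, hvtrace, smul_eq_mul, mul_one, Matrix.trace_zero] at this
      exact this
    have hexp : ∑ ij, g ij • v ij
        = (p : ℂ) • (∑ ij, g ij • sigma d ij.1 ij.2) + (∑ ij, g ij) • (c1 • (1 : Matrix (ZMod d) (ZMod d) ℂ)) := by
      rw [hvdef, Finset.smul_sum, Finset.sum_smul]
      rw [← Finset.sum_add_distrib]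
      refine Finset.sum_congr rfl fun ij _ => ?_
      simp only [smul_add, smul_smul]
      rw [mul_comm]
    rw [hexp, hsum, zero_smul, add_zero] at hg
    have hS : ∑ ij, g ij • sigma d ij.1 ij.2 = 0 := by
      rcases smul_eq_zero.mp hg with h | h
      · exact absurd h hpne
      · exact h
    exact fun ij => Fintype.linearIndependent_iff.mp (sigma_linIndep d) g hS ij
  exact ⟨v ∘ e, fun k => hvmem (e k), hvli.comp e e.injective, fun k => hvdens (e k)⟩
end
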